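/- Let E be a real Hilbert space, Z a set, and h : E × Z → ℝ such that for every z ∈ Z the map θ ↦ h(θ,z) is convex, L-Lipschitz, differentiable, and η-approximately β-gradient Lipschitz. Let S, S' ∈ Zⁿ differ in exactly one coordinate, let step sizes satisfy 0 < α_t ≤ 1/β, and for each index sequence i ∈ (Fin n)^T define SGD trajectories θ_S^t(i), θ_{S'}^t(i) as θ^{t+1} = θ^t − α_{t+1}∇_θ h(θ^t, ·) on the sample with index i_{t+1}, both from a common initialization. Let θ̄_S(i) = (1/T)∑_{t=1}^T θ_S^t(i) and θ̄_{S'}(i) = (1/T)∑_{t=1}^T θ_{S'}^t(i) be the stochastic-weight-averaged iterates. Then n^{−T} ∑_{i ∈ (Fin n)^T} ‖θ̄_S(i) − θ̄_{S'}(i)‖ ≤ (η + 2L/n) ∑_{t=1}^T α_t (T − t + 1)/T; in particular for constant step size α this bound equals (η + 2L/n)·α(T+1)/2, roughly half of the bound (η + 2L/n)∑α_t for the last iterate. -/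

import Mathlib

open RealInnerProductSpace


/-- First-order condition for convex differentiable functions. -/
lemma swa_first_order {E : Type*} [NormedAddCommGroup E] [InnerProductSpace ℝ E]
    [CompleteSpace E] (f : E → ℝ) (D : E → E) (hconv : ConvexOn ℝ Set.univ f)
    (hgrad : ∀ θ, HasGradientAt f (D θ) θ) (x y : E) :
    f x + ⟪D x, y - x⟫ ≤ f y := by
  set c : ℝ → E := fun t => x + t • (y - x) with hc
  have hpath : ∀ t : ℝ, HasDerivAt c (y - x) t := by
    intro t
    simpa [hc] using ((hasDerivAt_id t).smul_const (y - x)).const_add x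
  have hφ : ∀ t : ℝ, HasDerivAt (fun t => f (c t)) ⟪D (c t), y - x⟫ t := by
    intro t
    have h1 := ((hgrad (c t)).hasFDerivAt).comp_hasDerivAt t (hpath t)
    simp at h1; exact h1
  have hconvφ : ConvexOn ℝ Set.univ (fun t : ℝ => f (c t)) := by
    have := hconv.comp_affineMap (AffineMap.lineMap x y : ℝ →ᵃ[ℝ] E)
    simp only [Set.preimage_univ] at this
    have heq : (fun t : ℝ => f (c t)) = f ∘ (AffineMap.lineMap x y) := by
      funext t
      simp [hc, AffineMap.lineMap_apply, Function.comp, add_comm]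
    rw [heq]
    exact this
  have hslope := hconvφ.le_slope_of_hasDerivAt (Set.mem_univ 0) (Set.mem_univ 1)
    zero_lt_one (hφ 0)
  have h0 : c 0 = x := by simp [hc]
  have h1 : c 1 = y := by simp [hc]
  rw [slope_def_field] at hslope
  simp only [h0, h1] at hslope
  have : ⟪D x, y - x⟫ ≤ f y - f x := by
    simpa [div_one] using hslope
  linarith
/-- Refined first-order lower bound for approximately smooth convex functions. -/
lemma swa_refined {E : Type*} [NormedAddCommGroup E] [InnerProductSpace ℝ E]
    [CompleteSpace E] (f : E → ℝ) (D : E → E) (β η : ℝ) (hβ : 0 < β) (hη : 0 < η)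
    (hconv : ConvexOn ℝ Set.univ f)
    (hgrad : ∀ θ, HasGradientAt f (D θ) θ)
    (happrox : ∀ θ1 θ2, ‖D θ1 - D θ2‖ ≤ β * ‖θ1 - θ2‖ + η)
    (x y : E) (hu : η ≤ ‖D y - D x‖) :
    f x + ⟪D x, y - x⟫ + (‖D y - D x‖ - η) ^ 2 / (2 * β) ≤ f y := by
  set u : E := D y - D x with hu_def
  set U : ℝ := ‖u‖ with hU
  have hU0 : 0 < U := lt_of_lt_of_le hη hu
  set s0 : ℝ := (U - η) / (β * U) with hs0
  have hs0nn : 0 ≤ s0 := div_nonneg (by linarith) (by positivity)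
  set p : ℝ → E := fun s => y - s • u with hp
  set ψ : ℝ → ℝ := fun s =>
    f (p s) - (⟪D x, y⟫ - s * ⟪D x, u⟫) + s * (U ^ 2 - η * U) - s ^ 2 * (β * U ^ 2) / 2
    with hψ
  have hpath : ∀ s : ℝ, HasDerivAt p (-u) s := by
    intro s
    simpa using ((hasDerivAt_id s).smul_const u).const_sub y
  have hfp : ∀ s : ℝ, HasDerivAt (fun s => f (p s)) ⟪D (p s), -u⟫ s := by
    intro s
    have h1 := ((hgrad (p s)).hasFDerivAt).comp_hasDerivAt s (hpath s)
    simp at h1; rw [inner_neg_right]; exact h1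
  have hψd : ∀ s : ℝ, HasDerivAt ψ
      (⟪D (p s), -u⟫ + ⟪D x, u⟫ + (U ^ 2 - η * U) - s * (β * U ^ 2)) s := by
    intro s
    have h1 : HasDerivAt (fun s : ℝ => ⟪D x, y⟫ - s * ⟪D x, u⟫) (-⟪D x, u⟫) s := by
      simpa using ((hasDerivAt_id s).mul_const ⟪D x, u⟫).const_sub ⟪D x, y⟫
    have h2 : HasDerivAt (fun s : ℝ => s * (U ^ 2 - η * U)) (U ^ 2 - η * U) s := by
      simpa using (hasDerivAt_id s).mul_const (U ^ 2 - η * U)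
    have h3 : HasDerivAt (fun s : ℝ => s ^ 2 * (β * U ^ 2) / 2) (s * (β * U ^ 2)) s := by
      have := ((hasDerivAt_pow 2 s).mul_const (β * U ^ 2)).div_const 2
      simpa using this.congr_deriv (by ring)
    have := (((hfp s).sub h1).add h2).sub h3
    exact this.congr_deriv (by ring)
  have hderiv_nonpos : ∀ s : ℝ, 0 ≤ s →
      ⟪D (p s), -u⟫ + ⟪D x, u⟫ + (U ^ 2 - η * U) - s * (β * U ^ 2) ≤ 0 := by
    intro s hs
    have hUsq : U ^ 2 = ⟪D y - D x, u⟫ := by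
      rw [hU, hu_def]; rw [real_inner_self_eq_norm_sq]
    have hrw : ⟪D (p s), -u⟫ + ⟪D x, u⟫ + (U ^ 2 - η * U) - s * (β * U ^ 2)
        = ⟪D y - D (p s), u⟫ - η * U - s * (β * U ^ 2) := by
      rw [hUsq]
      simp [inner_sub_left, inner_neg_right]
      ring
    rw [hrw]
    have hcs : ⟪D y - D (p s), u⟫ ≤ ‖D y - D (p s)‖ * U := by
      simpa [hU] using real_inner_le_norm (D y - D (p s)) u
    have hap : ‖D y - D (p s)‖ ≤ β * (s * U) + η := by
      have := happrox y (p s)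
      have hyp : ‖y - p s‖ = s * U := by
        simp [hp, norm_smul, abs_of_nonneg hs, hU]
      rw [hyp] at this
      exact this
    nlinarith [hU0.le, mul_nonneg (mul_nonneg hβ.le hs) hU0.le]
  have hmono : AntitoneOn ψ (Set.Icc 0 s0) := by
    apply antitoneOn_of_deriv_nonpos (convex_Icc 0 s0)
    · have hdiff : Differentiable ℝ ψ := fun s => (hψd s).differentiableAt
      exact hdiff.continuous.continuousOn
    · intro s _; exact (hψd s).differentiableAt.differentiableWithinAt
    · intro s hs
      rw [interior_Icc] at hs
      rw [(hψd s).deriv]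
      exact hderiv_nonpos s hs.1.le
  have hψs0 : ψ s0 ≤ ψ 0 := hmono (Set.left_mem_Icc.2 hs0nn) (Set.mem_Icc.2 ⟨hs0nn, le_refl _⟩) hs0nn
  have hψ0 : ψ 0 = f y - ⟪D x, y⟫ := by simp [hψ, hp]
  have hfo := swa_first_order f D hconv hgrad x (p s0)
  have hps0 : ⟪D x, p s0 - x⟫ = ⟪D x, y - x⟫ - s0 * ⟪D x, u⟫ := by
    simp [hp, inner_sub_right, inner_smul_right]
    ring
  have hval : s0 * (U ^ 2 - η * U) - s0 ^ 2 * (β * U ^ 2) / 2 = (U - η) ^ 2 / (2 * β) := by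
    rw [hs0]; field_simp; ring
  have hψs0' : f (p s0) - (⟪D x, y⟫ - s0 * ⟪D x, u⟫) + (U - η) ^ 2 / (2 * β)
      ≤ f y - ⟪D x, y⟫ := by
    rw [← hψ0]
    calc f (p s0) - (⟪D x, y⟫ - s0 * ⟪D x, u⟫) + (U - η) ^ 2 / (2 * β)
        = ψ s0 := by rw [hψ]; simp only; linarith [hval]
      _ ≤ ψ 0 := hψs0
  rw [hps0] at hfo
  have : f x + (⟪D x, y - x⟫ - s0 * ⟪D x, u⟫) ≤ f (p s0) := by linarith
  linarith
/-- The scalar inequality behind the approximate non-expansiveness. -/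
lemma swa_scalar (β η a U W P : ℝ) (hβ : 0 < β) (hη : 0 < η) (ha : 0 < a)
    (hab : a * β ≤ 1) (hU0 : 0 ≤ U) (hW0 : 0 ≤ W) (hmono : 0 ≤ P)
    (hUW : U ≤ β * W + η) (hco : η < U → (U - η) ^ 2 / β ≤ P) :
    W ^ 2 - 2 * a * P + a ^ 2 * U ^ 2 ≤ (W + a * η) ^ 2 := by
  rcases le_or_gt U η with hcase | hcase
  · nlinarith [mul_nonneg ha.le hmono, mul_le_mul hcase hcase hU0 hη.le,
      mul_nonneg (mul_nonneg ha.le hη.le) hW0, sq_nonneg a]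
  · have hco' := hco hcase
    have hP : a * (U - η) ^ 2 ≤ P := by
      have h1 : a * (U - η) ^ 2 ≤ (1 / β) * (U - η) ^ 2 := by
        apply mul_le_mul_of_nonneg_right _ (sq_nonneg _)
        rw [le_div_iff₀ hβ]; linarith
      have h2 : (1 / β) * (U - η) ^ 2 = (U - η) ^ 2 / β := by ring
      linarith
    have h2a : 2 * a * (a * (U - η) ^ 2) ≤ 2 * a * P :=
      mul_le_mul_of_nonneg_left hP (by positivity)
    rcases le_or_gt (3 * η) U with hcase3 | hcase3
    · have h3 : 0 ≤ a ^ 2 * ((U - η) * (U - 3 * η)) :=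
        mul_nonneg (sq_nonneg a) (mul_nonneg (by linarith) (by linarith))
      nlinarith [mul_nonneg (mul_nonneg ha.le hη.le) hW0]
    · have hUβW : U - η ≤ β * W := by linarith
      have h2 : (U - η) * (3 * η - U) ≤ (β * W) * (2 * η) :=
        mul_le_mul hUβW (by linarith) (by linarith) (by positivity)
      have h2b : a ^ 2 * ((U - η) * (3 * η - U)) ≤ a ^ 2 * ((β * W) * (2 * η)) :=
        mul_le_mul_of_nonneg_left h2 (sq_nonneg a)
      have h3 : (a * β) * (a * (2 * η * W)) ≤ 1 * (a * (2 * η * W)) :=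
        mul_le_mul_of_nonneg_right hab (by positivity)
      nlinarith []

/-- Approximate non-expansiveness of the gradient step. -/
lemma swa_contract {E : Type*} [NormedAddCommGroup E] [InnerProductSpace ℝ E]
    [CompleteSpace E] (f : E → ℝ) (D : E → E) (β η : ℝ) (hβ : 0 < β) (hη : 0 < η)
    (hconv : ConvexOn ℝ Set.univ f)
    (hgrad : ∀ θ, HasGradientAt f (D θ) θ)
    (happrox : ∀ θ1 θ2, ‖D θ1 - D θ2‖ ≤ β * ‖θ1 - θ2‖ + η)
    (a : ℝ) (ha : 0 < a) (hab : a * β ≤ 1) (x y : E) :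
    ‖(x - a • D x) - (y - a • D y)‖ ≤ ‖x - y‖ + a * η := by
  set g : E := D x - D y with hg
  set d : E := x - y with hd
  have hvec : (x - a • D x) - (y - a • D y) = d - a • g := by
    rw [hd, hg]; rw [smul_sub]; abel
  rw [hvec]
  have hexp : ⟪g, d⟫ = -(⟪D x, y - x⟫ + ⟪D y, x - y⟫) := by
    rw [hg, hd]
    simp [inner_sub_left, inner_sub_right]
    ring
  have hmono : 0 ≤ ⟪g, d⟫ := by
    have h1 := swa_first_order f D hconv hgrad x y
    have h2 := swa_first_order f D hconv hgrad y x
    rw [hexp]; linarith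
  have hUW : ‖g‖ ≤ β * ‖d‖ + η := by
    have := happrox x y; rw [← hg, ← hd] at this; exact this
  have hco : η < ‖g‖ → (‖g‖ - η) ^ 2 / β ≤ ⟪g, d⟫ := by
    intro hcase
    have hn1 : ‖D y - D x‖ = ‖g‖ := by rw [← neg_sub (D x) (D y), norm_neg, ← hg]
    have h1 := swa_refined f D β η hβ hη hconv hgrad happrox x y (by rw [hn1]; exact hcase.le)
    have h2 := swa_refined f D β η hβ hη hconv hgrad happrox y x (by rw [← hg]; exact hcase.le)
    rw [hn1] at h1
    rw [show ‖D x - D y‖ = ‖g‖ by rw [← hg]] at h2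
    have heq : (‖g‖ - η) ^ 2 / (2 * β) + (‖g‖ - η) ^ 2 / (2 * β) = (‖g‖ - η) ^ 2 / β := by
      field_simp; ring
    rw [hexp]; linarith
  have hsq : ‖d - a • g‖ ^ 2 = ‖d‖ ^ 2 - 2 * a * ⟪g, d⟫ + a ^ 2 * ‖g‖ ^ 2 := by
    rw [norm_sub_sq_real, real_inner_smul_right, norm_smul, Real.norm_eq_abs,
      abs_of_nonneg ha.le, real_inner_comm]
    ring
  have key : ‖d - a • g‖ ^ 2 ≤ (‖d‖ + a * η) ^ 2 := by
    rw [hsq]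
    exact swa_scalar β η a ‖g‖ ‖d‖ ⟪g, d⟫ hβ hη ha hab (norm_nonneg _) (norm_nonneg _)
      hmono hUW hco
  nlinarith [norm_nonneg (d - a • g), norm_nonneg d, mul_pos ha hη, key]

/-- Gradient norm bound from Lipschitzness. -/
lemma swa_grad_bound {E : Type*} [NormedAddCommGroup E] [InnerProductSpace ℝ E]
    [CompleteSpace E] (f : E → ℝ) (D : E → E) (L : ℝ) (hL : 0 ≤ L)
    (hgrad : ∀ θ, HasGradientAt f (D θ) θ)
    (hLip : ∀ θ1 θ2, |f θ1 - f θ2| ≤ L * ‖θ1 - θ2‖) (θ : E) :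
    ‖D θ‖ ≤ L := by
  have hlip : LipschitzWith (Real.toNNReal L) f := by
    apply LipschitzWith.of_dist_le_mul
    intro a b
    have := hLip a b
    rw [Real.dist_eq, dist_eq_norm]
    rwa [Real.coe_toNNReal L hL]
  have := (hgrad θ).hasFDerivAt.le_of_lipschitz hlip
  rwa [LinearIsometryEquiv.norm_map, Real.coe_toNNReal L hL] at this
/-- Counting: summing an indicator of one coordinate over all index sequences. -/
lemma swa_count {n T : ℕ} (t : Fin T) (j : Fin n) (c : ℝ) :
    ∑ i : Fin T → Fin n, (if i t = j then c else 0) = (n : ℝ) ^ (T - 1) * c := by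
  classical
  have h1 : ∑ i : Fin T → Fin n, (if i t = j then c else 0)
      = ∑ p : Fin n × ({ s : Fin T // s ≠ t } → Fin n), (if p.1 = j then c else 0) := by
    rw [← Equiv.sum_comp (Equiv.funSplitAt t (Fin n)).symm
      (fun i : Fin T → Fin n => if i t = j then c else 0)]
    apply Finset.sum_congr rfl
    intro p _
    congr 1
    rw [Equiv.funSplitAt_symm_apply, dif_pos rfl]
  have hcard : Fintype.card ({ s : Fin T // s ≠ t } → Fin n) = n ^ (T - 1) := by
    rw [Fintype.card_fun]
    congr 1
    · exact Fintype.card_fin n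
    · rw [Fintype.card_subtype_compl, Fintype.card_subtype_eq, Fintype.card_fin]
  have h2 : ∀ x : Fin n, ∑ _y : { s : Fin T // s ≠ t } → Fin n, (if x = j then c else 0)
      = (n : ℝ) ^ (T - 1) * (if x = j then c else 0) := by
    intro x
    rw [Finset.sum_const, Finset.card_univ, hcard, nsmul_eq_mul]
    push_cast
    ring
  rw [h1, Fintype.sum_prod_type, Finset.sum_congr rfl (fun x _ => h2 x), ← Finset.mul_sum,
    Finset.sum_ite_eq' Finset.univ j (fun _ => c)]
  simp

/-- Gauss sum over `Icc 1 m` in `ℝ`. -/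
lemma swa_gauss (m : ℕ) : ∑ t ∈ Finset.Icc 1 m, (t : ℝ) = m * (m + 1) / 2 := by
  induction m with
  | zero => simp
  | succ m ih =>
    rw [← Finset.insert_Icc_right_eq_Icc_add_one (by omega : 1 ≤ m + 1), Finset.sum_insert (by simp)]
    push_cast
    rw [ih]
    ring

/-- Exchanging the double sum. -/
lemma swa_swap (T : ℕ) (α : ℕ → ℝ) :
    ∑ t ∈ Finset.Icc 1 T, ∑ s ∈ Finset.Icc 1 t, α s
      = ∑ s ∈ Finset.Icc 1 T, α s * ((T : ℝ) - s + 1) := by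
  have h1 : ∀ t ∈ Finset.Icc 1 T, ∑ s ∈ Finset.Icc 1 t, α s
      = ∑ s ∈ Finset.Icc 1 T, (if s ≤ t then α s else 0) := by
    intro t ht
    rw [Finset.mem_Icc] at ht
    rw [← Finset.sum_filter]
    apply Finset.sum_congr _ (fun _ _ => rfl)
    ext s
    simp only [Finset.mem_Icc, Finset.mem_filter]
    omega
  rw [Finset.sum_congr rfl h1, Finset.sum_comm]
  apply Finset.sum_congr rfl
  intro s hs
  rw [Finset.mem_Icc] at hs
  rw [← Finset.sum_filter]
  have hfil : Finset.filter (fun t => s ≤ t) (Finset.Icc 1 T) = Finset.Icc s T := by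
    ext t
    simp only [Finset.mem_Icc, Finset.mem_filter]
    omega
  rw [hfil, Finset.sum_const, Nat.card_Icc, nsmul_eq_mul]
  have hc : ((T + 1 - s : ℕ) : ℝ) = (T : ℝ) - s + 1 := by
    have : s ≤ T + 1 := by omega
    push_cast [Nat.cast_sub this]
    ring
  rw [hc]
  ring

/-- Theorem 6.2 (stability of stochastic weight averaging): averaging the SGD
trajectory weights each step's stability contribution by (T - t + 1)/T; for a constant
step size the resulting bound is `(η + 2L/n)·α(T+1)/2`. -/
theorem swa_uniform_stability
    {E : Type*} [NormedAddCommGroup E] [InnerProductSpace ℝ E] [CompleteSpace E]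
    {Z : Type*}
    (h : E → Z → ℝ) (D : E → Z → E) (L β η : ℝ) (hL : 0 ≤ L) (hβ : 0 < β) (hη : 0 < η)
    (hconv : ∀ z : Z, ConvexOn ℝ Set.univ (fun θ => h θ z))
    (hLip : ∀ (z : Z) (θ1 θ2 : E), |h θ1 z - h θ2 z| ≤ L * ‖θ1 - θ2‖)
    (hgrad : ∀ (z : Z) (θ : E), HasGradientAt (fun θ' => h θ' z) (D θ z) θ)
    (happrox : ∀ (z : Z) (θ1 θ2 : E), ‖D θ1 z - D θ2 z‖ ≤ β * ‖θ1 - θ2‖ + η)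
    (n T : ℕ) (hn : 0 < n) (hT : 0 < T)
    (S S' : Fin n → Z)
    (hdiff : ∃ j : Fin n, S j ≠ S' j ∧ ∀ i : Fin n, i ≠ j → S i = S' i)
    (θ0 : E) (α : ℕ → ℝ)
    (hα : ∀ t : ℕ, 1 ≤ t → t ≤ T → 0 < α t ∧ α t ≤ 1 / β)
    (θS θS' : (Fin T → Fin n) → ℕ → E)
    (hinitS : ∀ i, θS i 0 = θ0) (hinitS' : ∀ i, θS' i 0 = θ0)
    (hstepS : ∀ (i : Fin T → Fin n) (t : Fin T),
      θS i (t.val + 1) = θS i t.val - α (t.val + 1) • D (θS i t.val) (S (i t)))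
    (hstepS' : ∀ (i : Fin T → Fin n) (t : Fin T),
      θS' i (t.val + 1) = θS' i t.val - α (t.val + 1) • D (θS' i t.val) (S' (i t)))
    -- the stochastic-weight-averaged iterates
    (θbarS θbarS' : (Fin T → Fin n) → E)
    (hbarS : ∀ i, θbarS i = (T : ℝ)⁻¹ • ∑ t ∈ Finset.Icc 1 T, θS i t)
    (hbarS' : ∀ i, θbarS' i = (T : ℝ)⁻¹ • ∑ t ∈ Finset.Icc 1 T, θS' i t) :
    (1 / (n : ℝ) ^ T) * ∑ i : Fin T → Fin n, ‖θbarS i - θbarS' i‖ ≤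
        (η + 2 * L / n) * ∑ t ∈ Finset.Icc 1 T, α t * ((T : ℝ) - t + 1) / T ∧
    ∀ α0 : ℝ, (∀ t : ℕ, 1 ≤ t → t ≤ T → α t = α0) →
      (η + 2 * L / n) * ∑ t ∈ Finset.Icc 1 T, α t * ((T : ℝ) - t + 1) / T =
        (η + 2 * L / n) * (α0 * ((T : ℝ) + 1) / 2) := by
  obtain ⟨j, hj_ne, hj_eq⟩ := hdiff
  have hn0 : (0 : ℝ) < (n : ℝ) := by exact_mod_cast hn
  have hT0 : (0 : ℝ) < (T : ℝ) := by exact_mod_cast hT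
  have hgradbd : ∀ (z : Z) (θ : E), ‖D θ z‖ ≤ L := fun z θ =>
    swa_grad_bound (fun θ' => h θ' z) (fun θ' => D θ' z) L hL (hgrad z)
      (fun a b => hLip z a b) θ
  -- per-step bound
  have step : ∀ (k : ℕ) (hk : k < T) (i : Fin T → Fin n),
      ‖θS i (k + 1) - θS' i (k + 1)‖ ≤ ‖θS i k - θS' i k‖ + α (k + 1) * η +
        (if i ⟨k, hk⟩ = j then 2 * L * α (k + 1) else 0) := by
    intro k hk i
    have hα' := hα (k + 1) (by omega) (by omega)
    have e1 := hstepS i ⟨k, hk⟩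
    have e2 := hstepS' i ⟨k, hk⟩
    simp only at e1 e2
    rw [e1, e2]
    by_cases hij : i ⟨k, hk⟩ = j
    · rw [if_pos hij]
      set a := α (k + 1)
      set Dx := D (θS i k) (S (i ⟨k, hk⟩))
      set Dy := D (θS' i k) (S' (i ⟨k, hk⟩))
      have hvec : θS i k - a • Dx - (θS' i k - a • Dy)
          = (θS i k - θS' i k) - (a • Dx - a • Dy) := by abel
      rw [hvec]
      have h1 : ‖(θS i k - θS' i k) - (a • Dx - a • Dy)‖
          ≤ ‖θS i k - θS' i k‖ + ‖a • Dx - a • Dy‖ := norm_sub_le _ _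
      have h2 : ‖a • Dx - a • Dy‖ ≤ ‖a • Dx‖ + ‖a • Dy‖ := norm_sub_le _ _
      have h3 : ‖a • Dx‖ ≤ a * L := by
        rw [norm_smul, Real.norm_eq_abs, abs_of_nonneg hα'.1.le]
        exact mul_le_mul_of_nonneg_left (hgradbd _ _) hα'.1.le
      have h4 : ‖a • Dy‖ ≤ a * L := by
        rw [norm_smul, Real.norm_eq_abs, abs_of_nonneg hα'.1.le]
        exact mul_le_mul_of_nonneg_left (hgradbd _ _) hα'.1.le
      have h5 : 0 ≤ a * η := mul_nonneg hα'.1.le hη.le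
      linarith
    · rw [if_neg hij, add_zero]
      have hz : S' (i ⟨k, hk⟩) = S (i ⟨k, hk⟩) := (hj_eq (i ⟨k, hk⟩) hij).symm
      rw [hz]
      exact swa_contract (fun θ' => h θ' (S (i ⟨k, hk⟩))) (fun θ' => D θ' (S (i ⟨k, hk⟩)))
        β η hβ hη (hconv _) (hgrad _) (happrox _) (α (k + 1)) hα'.1
        ((le_div_iff₀ hβ).mp hα'.2) (θS i k) (θS' i k)
  set C : ℝ := η + 2 * L / n with hC
  have hC0 : 0 ≤ C := by
    have : 0 ≤ 2 * L / n := by positivity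
    rw [hC]; linarith
  have hcardfun : (Fintype.card (Fin T → Fin n) : ℝ) = (n : ℝ) ^ T := by
    rw [Fintype.card_fun, Fintype.card_fin, Fintype.card_fin]
    push_cast
    ring
  have hpow_split : (n : ℝ) ^ T = (n : ℝ) ^ (T - 1) * n := by
    rw [← pow_succ]
    congr 1
    omega
  -- main induction
  have key : ∀ k : ℕ, k ≤ T → ∑ i : Fin T → Fin n, ‖θS i k - θS' i k‖ ≤
      (n : ℝ) ^ T * (C * ∑ s ∈ Finset.Icc 1 k, α s) := by
    intro k
    induction k with
    | zero => intro _; simp [hinitS, hinitS']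
    | succ k ih =>
      intro hk
      have hkT : k < T := by omega
      have ihk := ih (by omega)
      have hα' := hα (k + 1) (by omega) (by omega)
      have hsum_step : ∑ i : Fin T → Fin n, ‖θS i (k + 1) - θS' i (k + 1)‖ ≤
          (∑ i : Fin T → Fin n, ‖θS i k - θS' i k‖) + (n : ℝ) ^ T * (α (k + 1) * η)
            + (n : ℝ) ^ (T - 1) * (2 * L * α (k + 1)) := by
        calc ∑ i : Fin T → Fin n, ‖θS i (k + 1) - θS' i (k + 1)‖
            ≤ ∑ i : Fin T → Fin n, (‖θS i k - θS' i k‖ + α (k + 1) * η +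
              (if i ⟨k, hkT⟩ = j then 2 * L * α (k + 1) else 0)) :=
              Finset.sum_le_sum (fun i _ => step k hkT i)
          _ = (∑ i : Fin T → Fin n, ‖θS i k - θS' i k‖)
              + (∑ _i : Fin T → Fin n, α (k + 1) * η)
              + ∑ i : Fin T → Fin n, (if i ⟨k, hkT⟩ = j then 2 * L * α (k + 1) else 0) := by
              rw [Finset.sum_add_distrib, Finset.sum_add_distrib]
          _ = (∑ i : Fin T → Fin n, ‖θS i k - θS' i k‖) + (n : ℝ) ^ T * (α (k + 1) * η)
              + (n : ℝ) ^ (T - 1) * (2 * L * α (k + 1)) := by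
              rw [swa_count ⟨k, hkT⟩ j (2 * L * α (k + 1))]
              rw [Finset.sum_const, Finset.card_univ, nsmul_eq_mul, hcardfun]
      have hicc : Finset.Icc 1 (k + 1) = insert (k + 1) (Finset.Icc 1 k) :=
        (Finset.insert_Icc_right_eq_Icc_add_one (by omega)).symm
      rw [hicc, Finset.sum_insert (by simp)]
      have halg : (n : ℝ) ^ T * (C * (α (k + 1) + ∑ s ∈ Finset.Icc 1 k, α s))
          = (n : ℝ) ^ T * (C * ∑ s ∈ Finset.Icc 1 k, α s)
            + (n : ℝ) ^ T * (α (k + 1) * η) + (n : ℝ) ^ (T - 1) * (2 * L * α (k + 1)) := by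
      -- C = η + 2L/n and n^T = n^(T-1) * n
        rw [hC]
        rw [hpow_split]
        field_simp
        ring
      rw [halg]
      linarith
  -- averaging
  have havg : ∀ i, ‖θbarS i - θbarS' i‖ ≤
      (T : ℝ)⁻¹ * ∑ t ∈ Finset.Icc 1 T, ‖θS i t - θS' i t‖ := by
    intro i
    rw [hbarS, hbarS', ← smul_sub, ← Finset.sum_sub_distrib]
    rw [norm_smul, Real.norm_eq_abs, abs_of_nonneg (by positivity)]
    exact mul_le_mul_of_nonneg_left (norm_sum_le _ _) (by positivity)
  have hsum1 : ∑ i : Fin T → Fin n, ‖θbarS i - θbarS' i‖ ≤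
      (T : ℝ)⁻¹ * ∑ t ∈ Finset.Icc 1 T, ∑ i : Fin T → Fin n, ‖θS i t - θS' i t‖ := by
    calc ∑ i : Fin T → Fin n, ‖θbarS i - θbarS' i‖
        ≤ ∑ i : Fin T → Fin n, ((T : ℝ)⁻¹ * ∑ t ∈ Finset.Icc 1 T, ‖θS i t - θS' i t‖) :=
          Finset.sum_le_sum (fun i _ => havg i)
      _ = (T : ℝ)⁻¹ * ∑ i : Fin T → Fin n, ∑ t ∈ Finset.Icc 1 T, ‖θS i t - θS' i t‖ := by
          rw [Finset.mul_sum]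
      _ = (T : ℝ)⁻¹ * ∑ t ∈ Finset.Icc 1 T, ∑ i : Fin T → Fin n, ‖θS i t - θS' i t‖ := by
          rw [Finset.sum_comm]
  have hsum2 : ∑ t ∈ Finset.Icc 1 T, ∑ i : Fin T → Fin n, ‖θS i t - θS' i t‖ ≤
      ∑ t ∈ Finset.Icc 1 T, (n : ℝ) ^ T * (C * ∑ s ∈ Finset.Icc 1 t, α s) :=
    Finset.sum_le_sum (fun t ht => key t (Finset.mem_Icc.mp ht).2)
  constructor
  · have hchain : ∑ i : Fin T → Fin n, ‖θbarS i - θbarS' i‖ ≤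
        (T : ℝ)⁻¹ * ((n : ℝ) ^ T * (C * ∑ t ∈ Finset.Icc 1 T, ∑ s ∈ Finset.Icc 1 t, α s)) := by
      have h1 : ∑ t ∈ Finset.Icc 1 T, (n : ℝ) ^ T * (C * ∑ s ∈ Finset.Icc 1 t, α s)
          = (n : ℝ) ^ T * (C * ∑ t ∈ Finset.Icc 1 T, ∑ s ∈ Finset.Icc 1 t, α s) := by
        simp [Finset.mul_sum]
      calc ∑ i : Fin T → Fin n, ‖θbarS i - θbarS' i‖
          ≤ (T : ℝ)⁻¹ * ∑ t ∈ Finset.Icc 1 T, ∑ i : Fin T → Fin n, ‖θS i t - θS' i t‖ := hsum1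
        _ ≤ (T : ℝ)⁻¹ * ∑ t ∈ Finset.Icc 1 T, (n : ℝ) ^ T * (C * ∑ s ∈ Finset.Icc 1 t, α s) :=
            mul_le_mul_of_nonneg_left hsum2 (by positivity)
        _ = (T : ℝ)⁻¹ * ((n : ℝ) ^ T * (C * ∑ t ∈ Finset.Icc 1 T, ∑ s ∈ Finset.Icc 1 t, α s)) := by
            rw [h1]
    have hfinal := mul_le_mul_of_nonneg_left hchain
      (by positivity : (0 : ℝ) ≤ 1 / (n : ℝ) ^ T)
    calc (1 / (n : ℝ) ^ T) * ∑ i : Fin T → Fin n, ‖θbarS i - θbarS' i‖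
        ≤ (1 / (n : ℝ) ^ T) *
          ((T : ℝ)⁻¹ * ((n : ℝ) ^ T * (C * ∑ t ∈ Finset.Icc 1 T, ∑ s ∈ Finset.Icc 1 t, α s))) :=
          hfinal
      _ = C * ((T : ℝ)⁻¹ * ∑ t ∈ Finset.Icc 1 T, ∑ s ∈ Finset.Icc 1 t, α s) := by
          field_simp
      _ = C * ∑ t ∈ Finset.Icc 1 T, α t * ((T : ℝ) - t + 1) / T := by
          rw [swa_swap, Finset.mul_sum]
          apply congrArg
          apply Finset.sum_congr rfl
          intro t _
          field_simp
  · intro α0 hα0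
    apply congrArg
    have h1 : ∀ t ∈ Finset.Icc 1 T, α t * ((T : ℝ) - t + 1) / T
        = (α0 / T) * ((T : ℝ) - t + 1) := by
      intro t ht
      rw [Finset.mem_Icc] at ht
      rw [hα0 t ht.1 ht.2]
      ring
    rw [Finset.sum_congr rfl h1, ← Finset.mul_sum]
    have h2 : ∑ t ∈ Finset.Icc 1 T, ((T : ℝ) - t + 1)
        = (T : ℝ) * ((T : ℝ) + 1) - (T : ℝ) * ((T : ℝ) + 1) / 2 := by
      have hsplit : ∑ t ∈ Finset.Icc 1 T, ((T : ℝ) - t + 1)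
          = (∑ t ∈ Finset.Icc 1 T, ((T : ℝ) + 1)) - ∑ t ∈ Finset.Icc 1 T, (t : ℝ) := by
        rw [← Finset.sum_sub_distrib]
        apply Finset.sum_congr rfl
        intro t _
        ring
      rw [hsplit, swa_gauss, Finset.sum_const, Nat.card_Icc, nsmul_eq_mul]
      push_cast
      ring
    rw [h2]
    field_simp
    ring
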